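/- With Φ as the pole-distribution factor on a tuple Λ containing λᵢ, the function (1 − λᵢ)·Φ_Λ, viewed as a rational function of λᵢ, evaluates at λᵢ = 1 to (−1)^{m−h} Φ_{Λ∖λᵢ}, where λᵢ is in position h of the increasing tuple Λ of length m. -/

import Mathlib

/-- The pole-distribution factor `Φ` of a tuple of reals. -/
noncomputable def Phi (m : ℕ) (l : Fin m → ℝ) : ℝ :=
  (∏ j : Fin m, ∏ k ∈ Finset.Ioi j, (l k - l j) / (1 - l j * l k)) *
    ∏ i : Fin m, (1 - l i)⁻¹

/-- Eq. (38): `(1 - λᵢ)·Φ_Λ`, as a rational function of the entry `λᵢ` in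
(0-based) position `h` of the tuple `Λ` of length `m+1`, evaluates at `λᵢ = 1`
to `(-1)^{(m+1)-(h+1)} Φ_{Λ∖λᵢ}`. -/
theorem one_sub_mul_Phi_eval_at_one (m : ℕ) (l : Fin (m + 1) → ℝ)
    (h : Fin (m + 1)) (hmono : StrictMono l)
    (h1 : ∀ q, q ≠ h → l q ≠ 1)
    (h2 : ∀ q r, q ≠ h → r ≠ h → q ≠ r → l q * l r ≠ 1) :
    Filter.Tendsto
      (fun x : ℝ => (1 - x) * Phi (m + 1) (Function.update l h x))
      (nhdsWithin 1 {(1 : ℝ)}ᶜ)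
      (nhds ((-1 : ℝ) ^ (m - (h : ℕ)) * Phi m (l ∘ h.succAbove))) := by
  classical
  set sa := h.succAbove with hsa
  -- continuity of coordinate functions
  have hcont : ∀ q : Fin (m+1), Continuous fun x : ℝ => Function.update l h x q := by
    intro q
    by_cases hq : q = h
    · subst hq; simpa using continuous_id'
    · simpa [Function.update_apply, hq] using continuous_const (y := l q)
  have hupd1 : ∀ q : Fin (m+1), q ≠ h → Function.update l h 1 q = l q := by
    intro q hq; simp [Function.update_apply, hq]
  have hne1 : ∀ q : Fin (m+1), q ≠ h → (1 : ℝ) - l q ≠ 0 := by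
    intro q hq
    exact sub_ne_zero_of_ne (Ne.symm (h1 q hq))
  -- denominators nonzero at 1
  have hden : ∀ j k : Fin (m+1), j ≠ k →
      1 - Function.update l h 1 j * Function.update l h 1 k ≠ 0 := by
    intro j k hjk
    by_cases hj : j = h
    · have hk : k ≠ h := fun hk' => hjk (hj.trans hk'.symm)
      rw [hj, Function.update_self, hupd1 k hk, one_mul]
      exact hne1 k hk
    · by_cases hk : k = h
      · rw [hk, Function.update_self, hupd1 j hj, mul_one]
        exact hne1 j hj
      · rw [hupd1 j hj, hupd1 k hk]
        exact sub_ne_zero_of_ne (Ne.symm (h2 j k hj hk hjk))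
  set C : ℝ := ∏ i : Fin m, (1 - l (sa i))⁻¹ with hC
  set f : ℝ → ℝ := fun x =>
    (∏ j : Fin (m+1), ∏ k ∈ Finset.Ioi j,
      (Function.update l h x k - Function.update l h x j) /
        (1 - Function.update l h x j * Function.update l h x k)) * C with hf
  -- Step 1: the two functions agree away from 1
  have heq : ∀ x : ℝ, x ∈ ({(1:ℝ)}ᶜ : Set ℝ) →
      (1 - x) * Phi (m+1) (Function.update l h x) = f x := by
    intro x hx
    have hx1 : x ≠ 1 := hx
    have hx0 : (1 : ℝ) - x ≠ 0 := sub_ne_zero_of_ne (Ne.symm hx1)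
    have hsplit : (∏ i : Fin (m+1), (1 - Function.update l h x i)⁻¹)
        = (1 - x)⁻¹ * ∏ i : Fin m, (1 - l (sa i))⁻¹ := by
      rw [Fin.prod_univ_succAbove (fun i => (1 - Function.update l h x i)⁻¹) h]
      congr 1
      · rw [Function.update_self]
      · refine Finset.prod_congr rfl fun i _ => ?_
        rw [Function.update_of_ne (Fin.succAbove_ne h i)]
    rw [Phi, hsplit, hf]
    simp only
    rw [show ∀ A : ℝ, (1 - x) * (A * ((1 - x)⁻¹ * C)) = ((1 - x) * (1 - x)⁻¹) * (A * C)
      from fun A => by ring, mul_inv_cancel₀ hx0, one_mul]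
  -- Step 2: f is continuous at 1
  have hfc : ContinuousAt f 1 := by
    rw [hf]
    apply ContinuousAt.mul _ continuousAt_const
    apply tendsto_finset_prod
    intro j _
    apply tendsto_finset_prod
    intro k hk
    have hjk : j ≠ k := ne_of_lt (Finset.mem_Ioi.mp hk)
    exact ContinuousAt.div
      (((hcont k).sub (hcont j)).continuousAt)
      ((continuous_const.sub ((hcont j).mul (hcont k))).continuousAt)
      (hden j k hjk)
  -- Step 3: compute f 1
  have hf1 : f 1 = (-1 : ℝ) ^ (m - (h:ℕ)) * Phi m (l ∘ sa) := by
    simp only [hf]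
    have hPh : (∏ k ∈ Finset.Ioi h,
        (Function.update l h 1 k - Function.update l h 1 h) /
          (1 - Function.update l h 1 h * Function.update l h 1 k))
        = (-1 : ℝ) ^ (m - (h:ℕ)) := by
      have : ∀ k ∈ Finset.Ioi h,
          (Function.update l h 1 k - Function.update l h 1 h) /
            (1 - Function.update l h 1 h * Function.update l h 1 k) = -1 := by
        intro k hk
        have hkh : k ≠ h := (Finset.mem_Ioi.mp hk).ne'
        rw [Function.update_self, hupd1 k hkh, one_mul,
          show l k - 1 = -(1 - l k) by ring, neg_div, div_self (hne1 k hkh)]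
      rw [Finset.prod_congr rfl this, Finset.prod_const, Fin.card_Ioi]
      simp
    have hPj : ∀ j' : Fin m, (∏ k ∈ Finset.Ioi (sa j'),
        (Function.update l h 1 k - Function.update l h 1 (sa j')) /
          (1 - Function.update l h 1 (sa j') * Function.update l h 1 k))
        = ∏ k' ∈ Finset.Ioi j',
            (l (sa k') - l (sa j')) / (1 - l (sa j') * l (sa k')) := by
      intro j'
      have hjh : sa j' ≠ h := Fin.succAbove_ne h j'
      have hGh : (Function.update l h 1 h - Function.update l h 1 (sa j')) /
          (1 - Function.update l h 1 (sa j') * Function.update l h 1 h) = 1 := by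
        rw [Function.update_self, hupd1 _ hjh, mul_one, div_self (hne1 _ hjh)]
      rw [← Finset.prod_erase (Finset.Ioi (sa j')) hGh]
      have hset : (Finset.Ioi (sa j')).erase h =
          (Finset.Ioi j').map ⟨sa, Fin.succAbove_right_injective⟩ := by
        ext k
        simp only [Finset.mem_erase, Finset.mem_map, Finset.mem_Ioi,
          Function.Embedding.coeFn_mk]
        constructor
        · rintro ⟨hk1, hk2⟩
          obtain ⟨k', rfl⟩ := Fin.exists_succAbove_eq hk1
          exact ⟨k', Fin.succAbove_lt_succAbove_iff.mp hk2, rfl⟩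
        · rintro ⟨k', hk', rfl⟩
          exact ⟨Fin.succAbove_ne h k', Fin.succAbove_lt_succAbove_iff.mpr hk'⟩
      rw [hset, Finset.prod_map]
      refine Finset.prod_congr rfl fun k' _ => ?_
      simp only [Function.Embedding.coeFn_mk]
      rw [hupd1 _ (Fin.succAbove_ne h k'), hupd1 _ hjh]
    rw [Fin.prod_univ_succAbove (fun j => ∏ k ∈ Finset.Ioi j,
      (Function.update l h 1 k - Function.update l h 1 j) /
        (1 - Function.update l h 1 j * Function.update l h 1 k)) h,
      hPh, Finset.prod_congr rfl (fun j' _ => hPj j'), Phi]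
    simp only [Function.comp_apply]
    rw [hC]
    ring
  -- assemble
  have : Filter.Tendsto f (nhdsWithin 1 {(1:ℝ)}ᶜ)
      (nhds ((-1 : ℝ) ^ (m - (h:ℕ)) * Phi m (l ∘ sa))) := by
    rw [← hf1]
    exact hfc.continuousWithinAt.tendsto
  refine this.congr' ?_
  filter_upwards [self_mem_nhdsWithin] with x hx
  exact (heq x hx).symm
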